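/- Fix t > r ≥ 0 with u := t - r > 1, and let D_{tr} = { (ρ,s) ∈ [0,∞)^2 : -(t+r) ≤ s-ρ ≤ t-r, t-r ≤ s+ρ ≤ t+r }. For a dyadic number R with R < u/8, let D_{tr}^R = D_{tr} ∩ {R < ρ < 2R} (and ρ < 2 for R = 1). Then, with v_+ := ⟨s+ρ⟩, one has ‖v_+^{-1}‖_{L^2(D_{tr}^{R})} ≲ 1 uniformly in R, t, r; summing, ‖v_+^{-1}‖_{L^2(D_{tr} ∩ {ρ < u/8})} ≲ (log(2+u))^{1/2}. -/

import Mathlib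

open MeasureTheory Real Set

noncomputable section

def jap (s : ℝ) : ℝ := Real.sqrt (1 + s ^ 2)

/-- The backward light cone with apex `(t,r)`, in the `(ρ, s)` plane. -/
def Dtr (t r : ℝ) : Set (ℝ × ℝ) :=
  {p | 0 ≤ p.1 ∧ 0 ≤ p.2 ∧ -(t + r) ≤ p.2 - p.1 ∧ p.2 - p.1 ≤ t - r ∧
    |t - r| ≤ p.2 + p.1 ∧ p.2 + p.1 ≤ t + r}

lemma jap_cont : Continuous fun p : ℝ × ℝ => ((jap (p.2 + p.1))⁻¹) ^ 2 := by
  have h : Continuous fun p : ℝ × ℝ => jap (p.2 + p.1) :=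
    (Real.continuous_sqrt).comp (by continuity)
  exact (h.inv₀ (fun p => by
    have : (0:ℝ) < Real.sqrt (1 + (p.2 + p.1) ^ 2) := Real.sqrt_pos.2 (by positivity)
    simpa [jap] using this.ne')).pow 2

lemma jap_sq_inv_le {x u : ℝ} (hu : 0 < u) (hx : u ≤ x) :
    ((jap x)⁻¹) ^ 2 ≤ (u ^ 2)⁻¹ := by
  rw [jap, inv_pow, Real.sq_sqrt (by positivity)]
  have hx2 : u ^ 2 ≤ x ^ 2 := by nlinarith
  have : u ^ 2 ≤ 1 + x ^ 2 := by nlinarith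
  exact inv_anti₀ (by positivity) this

lemma integral_le (S : Set (ℝ × ℝ)) (u a b c d : ℝ) (hu : 0 < u)
    (hab : a ≤ b) (hcd : c ≤ d)
    (hsub : S ⊆ Ioo a b ×ˢ Ioo c d)
    (hS : ∀ p ∈ S, u ≤ p.2 + p.1) :
    ∫ p in S, ((jap (p.2 + p.1))⁻¹) ^ 2 ≤ (u ^ 2)⁻¹ * ((b - a) * (d - c)) := by
  have hrect : volume (Ioo a b ×ˢ Ioo c d) = ENNReal.ofReal ((b - a) * (d - c)) := by
    rw [Measure.volume_eq_prod, Measure.prod_prod, Real.volume_Ioo, Real.volume_Ioo,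
      ENNReal.ofReal_mul (by linarith)]
  have hle : volume S ≤ ENNReal.ofReal ((b - a) * (d - c)) := by
    rw [← hrect]; exact measure_mono hsub
  have hfin : volume S < ⊤ := lt_of_le_of_lt hle ENNReal.ofReal_lt_top
  have htr : (volume S).toReal ≤ (b - a) * (d - c) :=
    ENNReal.toReal_le_of_le_ofReal (by nlinarith) hle
  have hbd : ∀ p ∈ S, ‖((jap (p.2 + p.1))⁻¹) ^ 2‖ ≤ (u ^ 2)⁻¹ := by
    intro p hp
    rw [Real.norm_of_nonneg (by positivity)]
    exact jap_sq_inv_le hu (hS p hp)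
  have := norm_setIntegral_le_of_norm_le_const (μ := volume) hfin hbd
  calc ∫ p in S, ((jap (p.2 + p.1))⁻¹) ^ 2
      ≤ ‖∫ p in S, ((jap (p.2 + p.1))⁻¹) ^ 2‖ := le_abs_self _
    _ ≤ (u ^ 2)⁻¹ * (volume S).toReal := this
    _ ≤ (u ^ 2)⁻¹ * ((b - a) * (d - c)) := by
        exact mul_le_mul_of_nonneg_left htr (by positivity)

/-- With `u = t - r > 1`: on each dyadic piece `D_{tr}^R = D_{tr} ∩ {R < ρ < 2R}`
with `R < u/8` (and `{ρ < 2}` for `R = 1`), the `L²` norm of `⟨s+ρ⟩⁻¹` is uniformly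
bounded; summing over `ρ < u/8` gives the bound `(log(2+u))^{1/2}`. -/
theorem stmt5 :
    ∃ C : ℝ, 0 < C ∧ ∀ t r : ℝ, 0 ≤ r → 1 < t - r →
      (∀ R : ℝ, 1 ≤ R → R < (t - r) / 8 →
        Real.sqrt (∫ p in Dtr t r ∩ {p : ℝ × ℝ | R < p.1 ∧ p.1 < 2 * R},
            ((jap (p.2 + p.1))⁻¹) ^ 2) ≤ C) ∧
      Real.sqrt (∫ p in Dtr t r ∩ {p : ℝ × ℝ | p.1 < 2},
          ((jap (p.2 + p.1))⁻¹) ^ 2) ≤ C ∧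
      Real.sqrt (∫ p in Dtr t r ∩ {p : ℝ × ℝ | p.1 < (t - r) / 8},
          ((jap (p.2 + p.1))⁻¹) ^ 2)
        ≤ C * Real.sqrt (Real.log (2 + (t - r))) := by
  refine ⟨4, by norm_num, fun t r hr hu => ?_⟩
  set u : ℝ := t - r with hudef
  clear_value u
  have hu0 : (0:ℝ) < u := by linarith
  have habs : |t - r| = u := by rw [hudef]; exact abs_of_pos (by linarith [hudef])
  have hsum : ∀ p ∈ Dtr t r, u ≤ p.2 + p.1 := by
    intro p hp
    have := hp.2.2.2.2.1
    rw [habs] at this; exact this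
  have hsqrt16 : Real.sqrt 16 = 4 := by
    rw [show (16:ℝ) = 4 ^ 2 by norm_num, Real.sqrt_sq (by norm_num)]
  refine ⟨?_, ?_, ?_⟩
  · intro R hR1 hR2
    have hsub : Dtr t r ∩ {p : ℝ × ℝ | R < p.1 ∧ p.1 < 2 * R} ⊆
        Ioo R (2 * R) ×ˢ Ioo (u - 2 * R) (u + 2 * R) := by
      rintro ⟨ρ, s⟩ ⟨⟨h0, h1, h2, h3, h4, h5⟩, hl, hh⟩
      rw [habs] at h4
      have h3' : s - ρ ≤ u := by rw [hudef]; exact h3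
      simp only [mem_prod, mem_Ioo] at *
      refine ⟨⟨by linarith, by linarith⟩, by linarith, by linarith⟩
    have key := integral_le _ u R (2 * R) (u - 2 * R) (u + 2 * R) hu0
      (by linarith) (by linarith) hsub
      (fun p hp => hsum p hp.1)
    have h16 : (u ^ 2)⁻¹ * ((2 * R - R) * ((u + 2 * R) - (u - 2 * R))) ≤ 16 := by
      rw [inv_mul_le_iff₀ (by positivity)]
      nlinarith
    calc Real.sqrt _ ≤ Real.sqrt 16 := Real.sqrt_le_sqrt (by linarith)
      _ = 4 := hsqrt16
  · have hsub : Dtr t r ∩ {p : ℝ × ℝ | p.1 < 2} ⊆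
        Ioo (-1 : ℝ) 2 ×ˢ Ioo (u - 2) (u + 2) := by
      rintro ⟨ρ, s⟩ ⟨⟨h0, h1, h2, h3, h4, h5⟩, hh⟩
      rw [habs] at h4
      have h3' : s - ρ ≤ u := by rw [hudef]; exact h3
      simp only [mem_prod, mem_Ioo, mem_setOf_eq] at *
      refine ⟨⟨by linarith, by linarith⟩, by linarith, by linarith⟩
    have key := integral_le _ u (-1) 2 (u - 2) (u + 2) hu0
      (by norm_num) (by linarith) hsub (fun p hp => hsum p hp.1)
    have h16 : (u ^ 2)⁻¹ * ((2 - (-1 : ℝ)) * ((u + 2) - (u - 2))) ≤ 16 := by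
      rw [inv_mul_le_iff₀ (by positivity)]
      nlinarith
    calc Real.sqrt _ ≤ Real.sqrt 16 := Real.sqrt_le_sqrt (by linarith)
      _ = 4 := hsqrt16
  · have hsub : Dtr t r ∩ {p : ℝ × ℝ | p.1 < u / 8} ⊆
        Ioo (-1 : ℝ) (u / 8) ×ˢ Ioo (u - u / 8) (u + u / 8) := by
      rintro ⟨ρ, s⟩ ⟨⟨h0, h1, h2, h3, h4, h5⟩, hh⟩
      rw [habs] at h4
      have h3' : s - ρ ≤ u := by rw [hudef]; exact h3
      have hh' : ρ < u / 8 := hh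
      simp only [mem_prod, mem_Ioo, mem_setOf_eq] at *
      refine ⟨⟨by linarith, by linarith⟩, by nlinarith, by nlinarith⟩
    have key := integral_le _ u (-1) (u / 8) (u - u / 8) (u + u / 8) hu0
      (by linarith) (by linarith) hsub (fun p hp => hsum p hp.1)
    have h16 : (u ^ 2)⁻¹ * ((u / 8 - (-1 : ℝ)) * ((u + u / 8) - (u - u / 8))) ≤ 16 := by
      rw [inv_mul_le_iff₀ (by positivity)]
      nlinarith
    have hlog : (1:ℝ) ≤ Real.sqrt (Real.log (2 + u)) := by
      rw [show (1:ℝ) = Real.sqrt 1 by simp]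
      apply Real.sqrt_le_sqrt
      have h3 : Real.exp 1 ≤ 2 + u := by
        have := Real.exp_one_lt_d9
        linarith
      calc (1:ℝ) = Real.log (Real.exp 1) := (Real.log_exp 1).symm
        _ ≤ Real.log (2 + u) := Real.log_le_log (Real.exp_pos 1) h3
    calc Real.sqrt _ ≤ Real.sqrt 16 := Real.sqrt_le_sqrt (by linarith)
      _ = 4 := hsqrt16
      _ = 4 * 1 := by ring
      _ ≤ 4 * Real.sqrt (Real.log (2 + u)) := by linarith
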